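/- Fix 0 < k < 1/10 and let ϕ : ℝ → ℝ be defined by ϕ(0) = 0 and ϕ(x) = k/n − k·x whenever |x| ∈ (1/(n+1), 1/n] ∪ (n, n+1] for some n = 1,2,…. Consider the boundary value problem: −u''(t) = sin(t) + ϕ(u(√(1−t))) + u(√t)/(5√t) for a.e. t ∈ [0,1], with u(0) = u(1) = 0. Then the functions α(t) = t² − t and β(t) = t − t² on [0,1] are respectively a lower and an upper solution: α(0) = α(1) = β(0) = β(1) = 0, and for a.e. t ∈ [0,1], sin(t) + ϕ(1 − t − √(1−t)) + (√t − 1)/5 ≥ −2 = −α''(t) and sin(t) + ϕ(√(1−t) − (1−t)) + (1 − √t)/5 ≤ 2 = −β''(t). -/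

import Mathlib

open MeasureTheory Set intervalIntegral Real Filter

noncomputable section

/-- `u` restricted to `[0,T]` belongs to `W^{2,1}`, with (a.e.) second derivative `g`. -/
def IsW21On (T : ℝ) (u g : ℝ → ℝ) : Prop :=
  IntegrableOn g (Icc (0:ℝ) T) ∧
  ∃ v : ℝ → ℝ,
    (∀ t ∈ Icc (0:ℝ) T, HasDerivWithinAt u (v t) (Icc (0:ℝ) T) t) ∧
    (∀ t ∈ Icc (0:ℝ) T, v t = v 0 + ∫ s in (0:ℝ)..t, g s)

/-- The right-hand side of Example 4.3. -/
def rhsEx1 (ϕ : ℝ → ℝ) (u : ℝ → ℝ) (t : ℝ) : ℝ :=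
  Real.sin t + ϕ (u (Real.sqrt (1 - t))) + u (Real.sqrt t) / (5 * Real.sqrt t)

/-- Solution of the Dirichlet problem of Example 4.3. -/
def IsSolutionEx1 (ϕ : ℝ → ℝ) (u : ℝ → ℝ) : Prop :=
  ContinuousOn u (Icc (0:ℝ) 1) ∧
  (∃ g : ℝ → ℝ, IsW21On 1 u g ∧
    ∀ᵐ t ∂(volume.restrict (Icc (0:ℝ) 1)), -g t = rhsEx1 ϕ u t) ∧
  u 0 = 0 ∧ u 1 = 0

/-- Lower solution of the Dirichlet problem of Example 4.3. -/
def IsLowerSolutionEx1 (ϕ : ℝ → ℝ) (α : ℝ → ℝ) : Prop :=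
  ContinuousOn α (Icc (0:ℝ) 1) ∧
  AEMeasurable (rhsEx1 ϕ α) (volume.restrict (Icc (0:ℝ) 1)) ∧
  (∃ g : ℝ → ℝ, IsW21On 1 α g ∧
    ∀ᵐ t ∂(volume.restrict (Icc (0:ℝ) 1)), -g t ≤ rhsEx1 ϕ α t) ∧
  α 0 ≤ 0 ∧ α 1 ≤ 0

/-- Upper solution of the Dirichlet problem of Example 4.3. -/
def IsUpperSolutionEx1 (ϕ : ℝ → ℝ) (β : ℝ → ℝ) : Prop :=
  ContinuousOn β (Icc (0:ℝ) 1) ∧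
  AEMeasurable (rhsEx1 ϕ β) (volume.restrict (Icc (0:ℝ) 1)) ∧
  (∃ g : ℝ → ℝ, IsW21On 1 β g ∧
    ∀ᵐ t ∂(volume.restrict (Icc (0:ℝ) 1)), rhsEx1 ϕ β t ≤ -g t) ∧
  0 ≤ β 0 ∧ 0 ≤ β 1

lemma hasDerivAt_alphaEx (t : ℝ) : HasDerivAt (fun t : ℝ => t ^ 2 - t) (2 * t - 1) t := by
  simpa using ((hasDerivAt_pow 2 t).fun_sub (hasDerivAt_id t))

lemma hasDerivAt_betaEx (t : ℝ) : HasDerivAt (fun t : ℝ => t - t ^ 2) (1 - 2 * t) t := by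
  simpa using ((hasDerivAt_id t).fun_sub (hasDerivAt_pow 2 t))

lemma w21_alphaEx : IsW21On 1 (fun t => t ^ 2 - t) (fun _ => (2 : ℝ)) := by
  refine ⟨integrableOn_const measure_Icc_lt_top.ne,
    fun t => 2 * t - 1, fun t _ => (hasDerivAt_alphaEx t).hasDerivWithinAt, fun t _ => ?_⟩
  simp [intervalIntegral.integral_const]
  ring

lemma w21_betaEx : IsW21On 1 (fun t => t - t ^ 2) (fun _ => (-2 : ℝ)) := by
  refine ⟨integrableOn_const measure_Icc_lt_top.ne,
    fun t => 1 - 2 * t, fun t _ => (hasDerivAt_betaEx t).hasDerivWithinAt, fun t _ => ?_⟩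
  simp [intervalIntegral.integral_const]
  ring

/-- the division term bounds -/
lemma divterm_boundsEx {t : ℝ} (ht : t ∈ Icc (0:ℝ) 1) :
    -(1/5) ≤ (t - Real.sqrt t) / (5 * Real.sqrt t) ∧
    (Real.sqrt t - t) / (5 * Real.sqrt t) ≤ 1/5 := by
  rcases eq_or_lt_of_le ht.1 with h | h
  · simp [← h]
  · have hs : 0 < Real.sqrt t := Real.sqrt_pos.mpr h
    have hs1 : Real.sqrt t ≤ 1 := Real.sqrt_le_one.mpr ht.2
    have hmul : Real.sqrt t * Real.sqrt t = t := Real.mul_self_sqrt ht.1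
    have h1 : (t - Real.sqrt t) / (5 * Real.sqrt t) = (Real.sqrt t - 1) / 5 := by
      rw [div_eq_div_iff (by positivity) (by norm_num)]
      linear_combination (-5 : ℝ) * hmul
    have h2 : (Real.sqrt t - t) / (5 * Real.sqrt t) = (1 - Real.sqrt t) / 5 := by
      rw [div_eq_div_iff (by positivity) (by norm_num)]
      linear_combination (5 : ℝ) * hmul
    rw [h1, h2]
    constructor <;> [linarith [Real.sqrt_nonneg t]; linarith [Real.sqrt_nonneg t]]

/-- **Example 4.3, lower and upper solutions.** With `ϕ(0) = 0` and
`ϕ(x) = k/n − kx` for `|x| ∈ (1/(n+1), 1/n] ∪ (n, n+1]`, `0 < k < 1/10`, the functions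
`α(t) = t² − t` and `β(t) = t − t²` are respectively a lower and an upper solution of
`−u'' = sin t + ϕ(u(√(1−t))) + u(√t)/(5√t)`, `u(0) = u(1) = 0`. -/
theorem example1_lower_upper_solutions
    (k : ℝ) (hk0 : 0 < k) (hk : k < 1 / 10)
    (ϕ : ℝ → ℝ) (hϕ0 : ϕ 0 = 0)
    (hϕ : ∀ (x : ℝ) (n : ℕ), 1 ≤ n →
      |x| ∈ Ioc (1 / ((n : ℝ) + 1)) (1 / (n : ℝ)) ∪ Ioc (n : ℝ) ((n : ℝ) + 1) →
      ϕ x = k / (n : ℝ) - k * x) :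
    IsLowerSolutionEx1 ϕ (fun t => t ^ 2 - t) ∧
    IsUpperSolutionEx1 ϕ (fun t => t - t ^ 2) ∧
    (fun t : ℝ => t ^ 2 - t) 0 = 0 ∧ (fun t : ℝ => t ^ 2 - t) 1 = 0 ∧
    (fun t : ℝ => t - t ^ 2) 0 = 0 ∧ (fun t : ℝ => t - t ^ 2) 1 = 0 ∧
    IsW21On 1 (fun t => t ^ 2 - t) (fun _ => (2 : ℝ)) ∧
    IsW21On 1 (fun t => t - t ^ 2) (fun _ => (-2 : ℝ)) ∧
    (∀ᵐ t ∂(volume.restrict (Icc (0:ℝ) 1)),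
      -2 ≤ Real.sin t + ϕ (1 - t - Real.sqrt (1 - t)) + (Real.sqrt t - 1) / 5 ∧
      Real.sin t + ϕ (Real.sqrt (1 - t) - (1 - t)) + (1 - Real.sqrt t) / 5 ≤ 2) := by
  -- the measurable model of ϕ near 0
  set F : ℝ → ℝ := fun x => if x = 0 then 0 else k / (⌊1/|x|⌋₊ : ℝ) - k * x with hF
  -- key structure lemma for ϕ on [-1/2, 1/2]
  have hkey : ∀ x : ℝ, |x| ≤ 1/2 → ϕ x = F x ∧ |ϕ x| ≤ k := by
    intro x hx
    rcases eq_or_ne x 0 with rfl | hne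
    · simp [hF, hϕ0, hk0.le]
    · have hx0 : 0 < |x| := abs_pos.mpr hne
      have h2 : (2:ℝ) ≤ 1/|x| := by rw [le_div_iff₀ hx0]; linarith
      set n : ℕ := ⌊1/|x|⌋₊ with hn
      have hn2 : 2 ≤ n := Nat.le_floor (by exact_mod_cast h2)
      have hn2' : (2:ℝ) ≤ (n:ℝ) := by exact_mod_cast hn2
      have hnpos : (0:ℝ) < n := by linarith
      have hfl : (n:ℝ) ≤ 1/|x| := Nat.floor_le (by positivity)
      have hfl2 : 1/|x| < (n:ℝ) + 1 := Nat.lt_floor_add_one _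
      have hub : |x| ≤ 1/(n:ℝ) := by
        rw [le_div_iff₀ hnpos]
        rw [le_div_iff₀ hx0] at hfl
        linarith
      have hlb : 1/((n:ℝ)+1) < |x| := by
        rw [div_lt_iff₀ (by linarith)]
        rw [div_lt_iff₀ hx0] at hfl2
        linarith
      have hphix : ϕ x = k / (n:ℝ) - k * x :=
        hϕ x n (by omega) (Or.inl ⟨hlb, hub⟩)
      have hFx : F x = k / (n:ℝ) - k * x := by
        rw [hF]; simp only [if_neg hne]; rfl
      have hkn : 0 < k/(n:ℝ) := by positivity
      have hkn2 : k/(n:ℝ) ≤ k/2 := by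
        apply div_le_div_of_nonneg_left hk0.le (by norm_num) hn2'
      have hkx : |k * x| ≤ k/2 := by
        rw [abs_mul, abs_of_pos hk0]
        nlinarith
      rw [abs_le] at hkx
      refine ⟨hphix.trans hFx.symm, ?_⟩
      rw [hphix, abs_le]
      constructor <;> linarith
  -- bounds on the deviated arguments
  have harg : ∀ t ∈ Icc (0:ℝ) 1,
      |1 - t - Real.sqrt (1-t)| ≤ 1/2 ∧ |Real.sqrt (1-t) - (1-t)| ≤ 1/2 := by
    intro t ht
    have h0 : (0:ℝ) ≤ 1 - t := by linarith [ht.2]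
    have hs0 : 0 ≤ Real.sqrt (1-t) := Real.sqrt_nonneg _
    have hs1 : Real.sqrt (1-t) ≤ 1 := Real.sqrt_le_one.mpr (by linarith [ht.1])
    have hsq : Real.sqrt (1-t) ^ 2 = 1 - t := Real.sq_sqrt h0
    constructor <;> rw [abs_le] <;> constructor <;>
      nlinarith [sq_nonneg (Real.sqrt (1-t) - 1/2)]
  -- measurability of F
  have hFm : Measurable F := by
    have hfloor : Measurable fun x : ℝ => ((⌊1/|x|⌋₊ : ℕ) : ℝ) :=
      measurable_from_top.comp (Nat.measurable_floor.comp (measurable_const.div measurable_abs))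
    refine Measurable.ite ?_ measurable_const
      ((measurable_const.div hfloor).sub (measurable_const.mul measurable_id))
    simpa [Set.setOf_eq_eq_singleton] using measurableSet_singleton (0:ℝ)
  have hsqrtm : Measurable fun t : ℝ => Real.sqrt t := Real.continuous_sqrt.measurable
  -- pointwise identities for rhs on Icc
  have hrhsα : ∀ t ∈ Icc (0:ℝ) 1, rhsEx1 ϕ (fun t => t ^ 2 - t) t =
      Real.sin t + F (1 - t - Real.sqrt (1-t)) + (t - Real.sqrt t) / (5 * Real.sqrt t) := by
    intro t ht
    have h1 : Real.sqrt (1-t) ^ 2 = 1 - t := Real.sq_sqrt (by linarith [ht.2])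
    have h2 : Real.sqrt t ^ 2 = t := Real.sq_sqrt ht.1
    have := (hkey _ (harg t ht).1).1
    simp only [rhsEx1, h1, h2]
    rw [show (1:ℝ) - t - Real.sqrt (1-t) = 1 - t - Real.sqrt (1-t) from rfl] at this
    rw [← this]
  have hrhsβ : ∀ t ∈ Icc (0:ℝ) 1, rhsEx1 ϕ (fun t => t - t ^ 2) t =
      Real.sin t + F (Real.sqrt (1-t) - (1-t)) + (Real.sqrt t - t) / (5 * Real.sqrt t) := by
    intro t ht
    have h1 : Real.sqrt (1-t) ^ 2 = 1 - t := Real.sq_sqrt (by linarith [ht.2])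
    have h2 : Real.sqrt t ^ 2 = t := Real.sq_sqrt ht.1
    have := (hkey _ (harg t ht).2).1
    simp only [rhsEx1, h1, h2]
    rw [← this]
  -- AEMeasurability
  have haeα : AEMeasurable (rhsEx1 ϕ (fun t => t ^ 2 - t)) (volume.restrict (Icc (0:ℝ) 1)) := by
    have hGm : Measurable fun t : ℝ =>
        Real.sin t + F (1 - t - Real.sqrt (1-t)) + (t - Real.sqrt t) / (5 * Real.sqrt t) := by
      refine (Real.measurable_sin.add (hFm.comp ?_)).add
        ((measurable_id.sub hsqrtm).div (measurable_const.mul hsqrtm))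
      exact (measurable_const.sub measurable_id).sub
        ((measurable_const.sub measurable_id).comp measurable_id |>.sqrt)
    refine hGm.aemeasurable.congr ?_
    rw [Filter.EventuallyEq, ae_restrict_iff' measurableSet_Icc]
    exact ae_of_all _ fun t ht => (hrhsα t ht).symm
  have haeβ : AEMeasurable (rhsEx1 ϕ (fun t => t - t ^ 2)) (volume.restrict (Icc (0:ℝ) 1)) := by
    have hGm : Measurable fun t : ℝ =>
        Real.sin t + F (Real.sqrt (1-t) - (1-t)) + (Real.sqrt t - t) / (5 * Real.sqrt t) := by
      refine (Real.measurable_sin.add (hFm.comp ?_)).add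
        ((hsqrtm.sub measurable_id).div (measurable_const.mul hsqrtm))
      exact ((measurable_const.sub measurable_id).sqrt).sub (measurable_const.sub measurable_id)
    refine hGm.aemeasurable.congr ?_
    rw [Filter.EventuallyEq, ae_restrict_iff' measurableSet_Icc]
    exact ae_of_all _ fun t ht => (hrhsβ t ht).symm
  -- the differential inequalities
  have hineqα : ∀ᵐ t ∂(volume.restrict (Icc (0:ℝ) 1)),
      -(fun _ => (2:ℝ)) t ≤ rhsEx1 ϕ (fun t => t ^ 2 - t) t := by
    rw [ae_restrict_iff' measurableSet_Icc]
    refine ae_of_all _ fun t ht => ?_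
    rw [hrhsα t ht]
    have hsin : 0 ≤ Real.sin t := Real.sin_nonneg_of_nonneg_of_le_pi ht.1
      (le_trans ht.2 (by linarith [Real.pi_gt_three]))
    obtain ⟨hl, hr⟩ := abs_le.mp (hkey _ (harg t ht).1).2
    rw [(hkey _ (harg t ht).1).1] at hl hr
    have hd := (divterm_boundsEx ht).1
    show (-2:ℝ) ≤ _
    linarith
  have hineqβ : ∀ᵐ t ∂(volume.restrict (Icc (0:ℝ) 1)),
      rhsEx1 ϕ (fun t => t - t ^ 2) t ≤ -(fun _ => (-2:ℝ)) t := by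
    rw [ae_restrict_iff' measurableSet_Icc]
    refine ae_of_all _ fun t ht => ?_
    rw [hrhsβ t ht]
    have hsin : Real.sin t ≤ 1 := Real.sin_le_one t
    obtain ⟨hl, hr⟩ := abs_le.mp (hkey _ (harg t ht).2).2
    rw [(hkey _ (harg t ht).2).1] at hl hr
    have hd := (divterm_boundsEx ht).2
    show _ ≤ -(-2:ℝ)
    linarith
  have hcontα : ContinuousOn (fun t : ℝ => t ^ 2 - t) (Icc (0:ℝ) 1) :=
    (continuous_pow 2 |>.sub continuous_id).continuousOn
  have hcontβ : ContinuousOn (fun t : ℝ => t - t ^ 2) (Icc (0:ℝ) 1) :=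
    (continuous_id.sub (continuous_pow 2)).continuousOn
  refine ⟨⟨hcontα, haeα, ⟨fun _ => 2, w21_alphaEx, hineqα⟩, by norm_num, by norm_num⟩,
    ⟨hcontβ, haeβ, ⟨fun _ => -2, w21_betaEx, hineqβ⟩, by norm_num, by norm_num⟩,
    by norm_num, by norm_num, by norm_num, by norm_num, w21_alphaEx, w21_betaEx, ?_⟩
  rw [ae_restrict_iff' measurableSet_Icc]
  refine ae_of_all _ fun t ht => ?_
  have hsin0 : 0 ≤ Real.sin t := Real.sin_nonneg_of_nonneg_of_le_pi ht.1
    (le_trans ht.2 (by linarith [Real.pi_gt_three]))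
  have hsin1 : Real.sin t ≤ 1 := Real.sin_le_one t
  have hϕ1 := (hkey _ (harg t ht).1).2
  have hϕ2 := (hkey _ (harg t ht).2).2
  rw [abs_le] at hϕ1 hϕ2
  have hst0 : 0 ≤ Real.sqrt t := Real.sqrt_nonneg t
  have hst1 : Real.sqrt t ≤ 1 := Real.sqrt_le_one.mpr ht.2
  constructor <;> [skip; skip] <;> linarith [hϕ1.1, hϕ1.2, hϕ2.1, hϕ2.2]

end
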